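/- In the split octonion algebra O = F^{2×2} ⊕ F^{2×2}w with multiplication (a+xw)(b+yw) = ab + ȳx + (ya + x b̄)w, let n₀ = E₁₂ and p₀ = E₁₁ (matrix units). Then the 4-dimensional subspace n₀O is a subalgebra of O that is not associative: specifically, p₀((p̄₀w)(n₀w)) = −n₀ while (p₀(p̄₀w))(n₀w) = 0. -/

import Mathlib

open Matrix

/-- The quaternion conjugate on `F^{2×2}`. -/
noncomputable def quatConj {F : Type*} [Field F] (x : Matrix (Fin 2) (Fin 2) F) :
    Matrix (Fin 2) (Fin 2) F :=
  Matrix.trace x • (1 : Matrix (Fin 2) (Fin 2) F) - x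

/-- The split octonion multiplication on `F^{2×2} × F^{2×2}`,
`(a+xw)(b+yw) = ab + ȳx + (ya + x b̄)w` (doubling with `w² = 1`). -/
noncomputable def omul {F : Type*} [Field F]
    (p q : Matrix (Fin 2) (Fin 2) F × Matrix (Fin 2) (Fin 2) F) :
    Matrix (Fin 2) (Fin 2) F × Matrix (Fin 2) (Fin 2) F :=
  (p.1 * q.1 + quatConj q.2 * p.2, q.2 * p.1 + p.2 * quatConj q.1)

/-- Parametrization of the subspace `n₀O`. -/
noncomputable def fmap (F : Type*) [Field F] :
    ((Fin 2 → F) × (Fin 2 → F)) →ₗ[F]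
      (Matrix (Fin 2) (Fin 2) F × Matrix (Fin 2) (Fin 2) F) where
  toFun p := (Matrix.of fun i j => if i = 0 then p.1 j else 0,
              Matrix.of fun i j => if j = 1 then p.2 i else 0)
  map_add' p q := by
    refine Prod.ext ?_ ?_ <;> ext i j <;> simp only [Matrix.of_apply, Prod.fst_add,
      Prod.snd_add, Pi.add_apply, Matrix.add_apply] <;> split <;> simp
  map_smul' c p := by
    refine Prod.ext ?_ ?_ <;> ext i j <;> simp only [Matrix.of_apply, Prod.smul_fst,
      Prod.smul_snd, Pi.smul_apply, Matrix.smul_apply, RingHom.id_apply,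
      smul_eq_mul] <;> split <;> simp

lemma mem_range_fmap_iff {F : Type*} [Field F]
    (z : Matrix (Fin 2) (Fin 2) F × Matrix (Fin 2) (Fin 2) F) :
    z ∈ Set.range ⇑(fmap F) ↔
      z.1 1 0 = 0 ∧ z.1 1 1 = 0 ∧ z.2 0 0 = 0 ∧ z.2 1 0 = 0 := by
  constructor
  · rintro ⟨p, rfl⟩
    simp [fmap]
  · rintro ⟨h1, h2, h3, h4⟩
    refine ⟨(fun j => z.1 0 j, fun i => z.2 i 1), ?_⟩
    refine Prod.ext ?_ ?_ <;> ext i j <;> fin_cases i <;> fin_cases j <;>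
      simp [fmap, h1, h2, h3, h4]

lemma range_omul_eq (F : Type*) [Field F] :
    Set.range (fun z => omul ((Matrix.single 0 1 1 : Matrix (Fin 2) (Fin 2) F), 0) z)
      = Set.range ⇑(fmap F) := by
  ext z
  rw [mem_range_fmap_iff]
  constructor
  · rintro ⟨⟨b, y⟩, rfl⟩
    refine ⟨?_, ?_, ?_, ?_⟩ <;>
      simp [omul, quatConj, Matrix.mul_apply, Fin.sum_univ_two,
        Matrix.single, Matrix.one_apply, Matrix.trace_fin_two]
  · rintro ⟨h1, h2, h3, h4⟩
    refine ⟨(Matrix.of fun i j => if i = 1 then z.1 0 j else 0,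
             Matrix.of fun i j => if j = 0 then z.2 i 1 else 0), ?_⟩
    refine Prod.ext ?_ ?_ <;> ext i j <;> fin_cases i <;> fin_cases j <;>
      simp [omul, quatConj, Matrix.mul_apply, Fin.sum_univ_two,
        Matrix.single, Matrix.one_apply, Matrix.trace_fin_two, h1, h2, h3, h4]

lemma closure_fmap {F : Type*} [Field F] (p q : (Fin 2 → F) × (Fin 2 → F)) :
    omul (fmap F p) (fmap F q) ∈ Set.range ⇑(fmap F) := by
  rw [mem_range_fmap_iff]
  refine ⟨?_, ?_, ?_, ?_⟩ <;>
    simp [omul, quatConj, fmap, Matrix.mul_apply, Fin.sum_univ_two,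
      Matrix.one_apply, Matrix.trace_fin_two]

lemma inj_fmap {F : Type*} [Field F] : Function.Injective (fmap F) := by
  rw [← LinearMap.ker_eq_bot]
  ext p
  simp only [LinearMap.mem_ker, Submodule.mem_bot]
  constructor
  · intro h
    have h1 := congrArg (fun z => z.1 0) h
    have h2 := congrArg (fun z => (fun i => z.2 i 1)) h
    refine Prod.ext ?_ ?_ <;> funext i
    · simpa [fmap] using congrFun h1 i
    · simpa [fmap] using congrFun h2 i
  · rintro rfl; simp

lemma rank_fmap {F : Type*} [Field F] :
    Module.finrank F (LinearMap.range (fmap F)) = 4 := by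
  rw [LinearMap.finrank_range_of_inj inj_fmap]
  simp [Module.finrank_prod]

lemma prods (F : Type*) [Field F] :
    omul ((Matrix.single 0 0 1 : Matrix (Fin 2) (Fin 2) F), 0)
        (omul (0, quatConj (Matrix.single 0 0 1)) (0, Matrix.single 0 1 1))
      = (-(Matrix.single 0 1 1), 0) ∧
    omul (omul ((Matrix.single 0 0 1 : Matrix (Fin 2) (Fin 2) F), 0)
        (0, quatConj (Matrix.single 0 0 1))) (0, Matrix.single 0 1 1) = 0 := by
  constructor <;>
  · refine Prod.ext ?_ ?_ <;> ext i j <;> fin_cases i <;> fin_cases j <;>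
      simp [omul, quatConj, Matrix.mul_apply, Fin.sum_univ_two,
        Matrix.single, Matrix.one_apply, Matrix.trace_fin_two]

/-- With `n₀ = E₁₂` and `p₀ = E₁₁`, the 4-dimensional subspace `n₀O`
is a subalgebra of the split octonion algebra which is not associative; specifically
`p₀((p̄₀w)(n₀w)) = -n₀` while `(p₀(p̄₀w))(n₀w) = 0`. -/
theorem stmt_5 (F : Type*) [Field F]
    (n₀ p₀ : Matrix (Fin 2) (Fin 2) F)
    (hn : n₀ = Matrix.single 0 1 1)
    (hp : p₀ = Matrix.single 0 0 1)
    (S : Submodule F (Matrix (Fin 2) (Fin 2) F × Matrix (Fin 2) (Fin 2) F))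
    (hS : (S : Set (Matrix (Fin 2) (Fin 2) F × Matrix (Fin 2) (Fin 2) F)) =
      Set.range (fun z => omul (n₀, 0) z)) :
    (∀ u ∈ S, ∀ v ∈ S, omul u v ∈ S) ∧
    Module.finrank F S = 4 ∧
    omul (p₀, 0) (omul (0, quatConj p₀) (0, n₀)) = (-n₀, 0) ∧
    omul (omul (p₀, 0) (0, quatConj p₀)) (0, n₀) = 0 ∧
    ¬ (∀ u ∈ S, ∀ v ∈ S, ∀ w ∈ S, omul (omul u v) w = omul u (omul v w)) := by
  subst hn hp
  have hrange : (S : Set _) = Set.range ⇑(fmap F) := hS.trans (range_omul_eq F)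
  have hSub : S = LinearMap.range (fmap F) :=
    SetLike.coe_injective (hrange.trans (LinearMap.coe_range _).symm)
  have hmem : ∀ z, z ∈ S ↔ z ∈ Set.range ⇑(fmap F) := by
    intro z
    rw [← SetLike.mem_coe, hrange]
  refine ⟨?_, ?_, (prods F).1, (prods F).2, ?_⟩
  · intro u hu v hv
    rw [hmem] at hu hv ⊢
    obtain ⟨p, rfl⟩ := hu
    obtain ⟨q, rfl⟩ := hv
    exact closure_fmap p q
  · rw [hSub]; exact rank_fmap
  · intro h
    have h1 : ((Matrix.single 0 0 1 : Matrix (Fin 2) (Fin 2) F), 0) ∈ S := by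
      rw [hmem, mem_range_fmap_iff]
      refine ⟨?_, ?_, ?_, ?_⟩ <;> simp [Matrix.single]
    have h2 : ((0 : Matrix (Fin 2) (Fin 2) F),
        quatConj (Matrix.single 0 0 1)) ∈ S := by
      rw [hmem, mem_range_fmap_iff]
      refine ⟨?_, ?_, ?_, ?_⟩ <;>
        simp [quatConj, Matrix.single, Matrix.one_apply, Matrix.trace_fin_two]
    have h3 : ((0 : Matrix (Fin 2) (Fin 2) F), Matrix.single 0 1 1) ∈ S := by
      rw [hmem, mem_range_fmap_iff]
      refine ⟨?_, ?_, ?_, ?_⟩ <;> simp [Matrix.single]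
    have := h _ h1 _ h2 _ h3
    rw [(prods F).1, (prods F).2] at this
    have := congrArg (fun z => z.1 0 1) this
    simp [Matrix.single] at this
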